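/- arXiv:1611.05563 — 4 statements merged into one kernel-verified Lean document; each statement's English description precedes it below -/
import Mathlib

section
/- For every real number q, the limit as ε → 0 from the right of (d/dy)(e^{−qy}/(1 − e^{−y}))|_{y=ε} + 1/ε² equals (1 − 6q + 6q²)/12. -/
open Filter Topology

/-- Generic shape of the numerator and its derivatives:
`k0 + a e^{-ε} + b e^{-2ε} + (p2 ε² + p1 ε + p0) e^{-qε} + (r2 ε² + r1 ε + r0) e^{-(q+1)ε}`. -/
noncomputable def dimF (q k0 a b p2 p1 p0 r2 r1 r0 : ℝ) : ℝ → ℝ := fun ε =>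
  k0 + a * Real.exp (-ε) + b * Real.exp (-(2 * ε))
    + (p2 * ε ^ 2 + p1 * ε + p0) * Real.exp (-(q * ε))
    + (r2 * ε ^ 2 + r1 * ε + r0) * Real.exp (-((q + 1) * ε))

lemma dimF_hasDerivAt (q k0 a b p2 p1 p0 r2 r1 r0 x : ℝ) :
    HasDerivAt (dimF q k0 a b p2 p1 p0 r2 r1 r0)
      (dimF q 0 (-a) (-(2 * b)) (-(q * p2)) (2 * p2 - q * p1) (p1 - q * p0)
        (-((q + 1) * r2)) (2 * r2 - (q + 1) * r1) (r1 - (q + 1) * r0) x) x := by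
  have h1 : HasDerivAt (fun ε : ℝ => Real.exp (-ε)) (Real.exp (-x) * (-1)) x :=
    ((hasDerivAt_id x).neg).exp
  have h2 : HasDerivAt (fun ε : ℝ => Real.exp (-(2 * ε))) (Real.exp (-(2 * x)) * (-(2 * 1))) x :=
    (((hasDerivAt_id x).const_mul 2).neg).exp
  have h3 : HasDerivAt (fun ε : ℝ => Real.exp (-(q * ε))) (Real.exp (-(q * x)) * (-(q * 1))) x :=
    (((hasDerivAt_id x).const_mul q).neg).exp
  have h4 : HasDerivAt (fun ε : ℝ => Real.exp (-((q + 1) * ε)))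
      (Real.exp (-((q + 1) * x)) * (-((q + 1) * 1))) x :=
    (((hasDerivAt_id x).const_mul (q + 1)).neg).exp
  have hp : HasDerivAt (fun ε : ℝ => p2 * ε ^ 2 + p1 * ε + p0) (p2 * (2 * x) + p1) x := by
    simpa using
      (((hasDerivAt_pow 2 x).const_mul p2).add ((hasDerivAt_id x).const_mul p1)).add_const p0
  have hr : HasDerivAt (fun ε : ℝ => r2 * ε ^ 2 + r1 * ε + r0) (r2 * (2 * x) + r1) x := by
    simpa using
      (((hasDerivAt_pow 2 x).const_mul r2).add ((hasDerivAt_id x).const_mul r1)).add_const r0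
  have := ((((h1.const_mul a).const_add k0).add (h2.const_mul b)).add (hp.mul h3)).add (hr.mul h4)
  refine this.congr_deriv ?_
  unfold dimF
  ring

lemma dimF_continuous (q k0 a b p2 p1 p0 r2 r1 r0 : ℝ) :
    Continuous (dimF q k0 a b p2 p1 p0 r2 r1 r0) := by
  unfold dimF
  fun_prop

lemma dimF_zero (q k0 a b p2 p1 p0 r2 r1 r0 : ℝ) :
    dimF q k0 a b p2 p1 p0 r2 r1 r0 0 = k0 + a + b + p0 + r0 := by
  simp [dimF]

/-- Base case `p = 3` of the dimension moment computation:
`lim_{ε→0⁺} ( (d/dy)(e^{-qy}/(1 - e^{-y}))|_{y=ε} + 1/ε² ) = (1 - 6q + 6q²)/12`. -/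
theorem dimension_moment_base_case (q : ℝ) :
    Tendsto (fun ε : ℝ =>
        deriv (fun y : ℝ => Real.exp (-(q * y)) / (1 - Real.exp (-y))) ε + 1 / ε ^ 2)
      (nhdsWithin 0 (Set.Ioi 0)) (nhds ((1 - 6 * q + 6 * q ^ 2) / 12)) := by
  -- the numerator functions N0, ..., N4 (successive derivatives)
  set N0 := dimF q 1 (-2) 1 (-q) 0 0 (-(1 - q)) 0 0 with hN0
  set N1 := dimF q 0 2 (-2) (q ^ 2) (-(2 * q)) 0 ((1 - q) * (q + 1)) (-(2 * (1 - q))) 0 with hN1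
  set N2 := dimF q 0 (-2) 4 (-(q ^ 3)) (4 * q ^ 2) (-(2 * q)) (-((1 - q) * (q + 1) ^ 2))
    (4 * (1 - q) * (q + 1)) (-(2 * (1 - q))) with hN2
  set N3 := dimF q 0 2 (-8) (q ^ 4) (-(6 * q ^ 3)) (6 * q ^ 2) ((1 - q) * (q + 1) ^ 3)
    (-(6 * (1 - q) * (q + 1) ^ 2)) (6 * (1 - q) * (q + 1)) with hN3
  set N4 := dimF q 0 (-2) 16 (-(q ^ 5)) (8 * q ^ 4) (-(12 * q ^ 3)) (-((1 - q) * (q + 1) ^ 4))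
    (8 * (1 - q) * (q + 1) ^ 3) (-(12 * (1 - q) * (q + 1) ^ 2)) with hN4
  have hd0 : ∀ x : ℝ, HasDerivAt N0 (N1 x) x := by
    intro x
    have := dimF_hasDerivAt q 1 (-2) 1 (-q) 0 0 (-(1 - q)) 0 0 x
    convert this using 1
    rw [hN1]; unfold dimF; ring
  have hd1 : ∀ x : ℝ, HasDerivAt N1 (N2 x) x := by
    intro x
    have := dimF_hasDerivAt q 0 2 (-2) (q ^ 2) (-(2 * q)) 0 ((1 - q) * (q + 1))
      (-(2 * (1 - q))) 0 x
    convert this using 1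
    rw [hN2]; unfold dimF; ring
  have hd2 : ∀ x : ℝ, HasDerivAt N2 (N3 x) x := by
    intro x
    have := dimF_hasDerivAt q 0 (-2) 4 (-(q ^ 3)) (4 * q ^ 2) (-(2 * q))
      (-((1 - q) * (q + 1) ^ 2)) (4 * (1 - q) * (q + 1)) (-(2 * (1 - q))) x
    convert this using 1
    rw [hN3]; unfold dimF; ring
  have hd3 : ∀ x : ℝ, HasDerivAt N3 (N4 x) x := by
    intro x
    have := dimF_hasDerivAt q 0 2 (-8) (q ^ 4) (-(6 * q ^ 3)) (6 * q ^ 2)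
      ((1 - q) * (q + 1) ^ 3) (-(6 * (1 - q) * (q + 1) ^ 2)) (6 * (1 - q) * (q + 1)) x
    convert this using 1
    rw [hN4]; unfold dimF; ring
  -- limits of the N's at 0 from the right
  have hNlim : ∀ (f : ℝ → ℝ), Continuous f → f 0 = 0 →
      Tendsto f (nhdsWithin (0:ℝ) (Set.Ioi 0)) (nhds 0) := by
    intro f hf h0
    have := (hf.tendsto 0).mono_left (nhdsWithin_le_nhds (s := Set.Ioi (0:ℝ)))
    rwa [h0] at this
  have hN0lim : Tendsto N0 (nhdsWithin (0:ℝ) (Set.Ioi 0)) (nhds 0) := by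
    refine hNlim _ (by rw [hN0]; exact dimF_continuous _ _ _ _ _ _ _ _ _ _) ?_
    rw [hN0, dimF_zero]; ring
  have hN1lim : Tendsto N1 (nhdsWithin (0:ℝ) (Set.Ioi 0)) (nhds 0) := by
    refine hNlim _ (by rw [hN1]; exact dimF_continuous _ _ _ _ _ _ _ _ _ _) ?_
    rw [hN1, dimF_zero]; ring
  have hN2lim : Tendsto N2 (nhdsWithin (0:ℝ) (Set.Ioi 0)) (nhds 0) := by
    refine hNlim _ (by rw [hN2]; exact dimF_continuous _ _ _ _ _ _ _ _ _ _) ?_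
    rw [hN2, dimF_zero]; ring
  have hN3lim : Tendsto N3 (nhdsWithin (0:ℝ) (Set.Ioi 0)) (nhds 0) := by
    refine hNlim _ (by rw [hN3]; exact dimF_continuous _ _ _ _ _ _ _ _ _ _) ?_
    rw [hN3, dimF_zero]; ring
  -- L'Hopital, four times
  have L4 : Tendsto (fun x : ℝ => N4 x / 24) (nhdsWithin (0:ℝ) (Set.Ioi 0))
      (nhds ((1 - 6 * q + 6 * q ^ 2) / 12)) := by
    have hc : Continuous N4 := by rw [hN4]; exact dimF_continuous _ _ _ _ _ _ _ _ _ _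
    have := ((hc.tendsto 0).mono_left (nhdsWithin_le_nhds (s := Set.Ioi (0:ℝ)))).div_const 24
    have h0 : N4 0 / 24 = (1 - 6 * q + 6 * q ^ 2) / 12 := by
      rw [hN4, dimF_zero]; ring
    rwa [h0] at this
  have L3 : Tendsto (fun x : ℝ => N3 x / (24 * x)) (nhdsWithin (0:ℝ) (Set.Ioi 0))
      (nhds ((1 - 6 * q + 6 * q ^ 2) / 12)) := by
    apply HasDerivAt.lhopital_zero_nhdsGT (f' := N4) (g' := fun _ => (24:ℝ))
    · exact Eventually.of_forall hd3
    · exact Eventually.of_forall fun x => by simpa using (hasDerivAt_id x).const_mul (24:ℝ)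
    · exact Eventually.of_forall fun x => by norm_num
    · exact hN3lim
    · have : Continuous (fun x : ℝ => 24 * x) := by fun_prop
      have := (this.tendsto 0).mono_left (nhdsWithin_le_nhds (s := Set.Ioi (0:ℝ)))
      simpa using this
    · exact L4
  have L2 : Tendsto (fun x : ℝ => N2 x / (12 * x ^ 2)) (nhdsWithin (0:ℝ) (Set.Ioi 0))
      (nhds ((1 - 6 * q + 6 * q ^ 2) / 12)) := by
    apply HasDerivAt.lhopital_zero_nhdsGT (f' := N3) (g' := fun x => 24 * x)
    · exact Eventually.of_forall hd2
    · exact Eventually.of_forall fun x => by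
        have h : HasDerivAt (fun x : ℝ => x ^ 2) (2 * x) x := by simpa using hasDerivAt_pow 2 x
        have := h.const_mul (12:ℝ)
        refine this.congr_deriv ?_
        ring
    · filter_upwards [self_mem_nhdsWithin] with x (hx : 0 < x)
      positivity
    · exact hN2lim
    · have : Continuous (fun x : ℝ => 12 * x ^ 2) := by fun_prop
      have := (this.tendsto 0).mono_left (nhdsWithin_le_nhds (s := Set.Ioi (0:ℝ)))
      simpa using this
    · exact L3
  have L1 : Tendsto (fun x : ℝ => N1 x / (4 * x ^ 3)) (nhdsWithin (0:ℝ) (Set.Ioi 0))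
      (nhds ((1 - 6 * q + 6 * q ^ 2) / 12)) := by
    apply HasDerivAt.lhopital_zero_nhdsGT (f' := N2) (g' := fun x => 12 * x ^ 2)
    · exact Eventually.of_forall hd1
    · exact Eventually.of_forall fun x => by
        have h : HasDerivAt (fun x : ℝ => x ^ 3) (3 * x ^ 2) x := by simpa using hasDerivAt_pow 3 x
        have := h.const_mul (4:ℝ)
        refine this.congr_deriv ?_
        ring
    · filter_upwards [self_mem_nhdsWithin] with x (hx : 0 < x)
      positivity
    · exact hN1lim
    · have : Continuous (fun x : ℝ => 4 * x ^ 3) := by fun_prop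
      have := (this.tendsto 0).mono_left (nhdsWithin_le_nhds (s := Set.Ioi (0:ℝ)))
      simpa using this
    · exact L2
  have L0 : Tendsto (fun x : ℝ => N0 x / x ^ 4) (nhdsWithin (0:ℝ) (Set.Ioi 0))
      (nhds ((1 - 6 * q + 6 * q ^ 2) / 12)) := by
    apply HasDerivAt.lhopital_zero_nhdsGT (f' := N1) (g' := fun x => 4 * x ^ 3)
    · exact Eventually.of_forall hd0
    · exact Eventually.of_forall fun x => by simpa using hasDerivAt_pow 4 x
    · filter_upwards [self_mem_nhdsWithin] with x (hx : 0 < x)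
      positivity
    · exact hN0lim
    · have : Continuous (fun x : ℝ => x ^ 4) := by fun_prop
      have := (this.tendsto 0).mono_left (nhdsWithin_le_nhds (s := Set.Ioi (0:ℝ)))
      simpa using this
    · exact L1
  -- the correction factor (x / (1 - e^{-x}))^2 → 1
  have hslope : Tendsto (fun x : ℝ => (1 - Real.exp (-x)) / x)
      (nhdsWithin (0:ℝ) (Set.Ioi 0)) (nhds 1) := by
    have hD : HasDerivAt (fun y : ℝ => 1 - Real.exp (-y)) 1 0 := by
      have := (hasDerivAt_const (0:ℝ) (1:ℝ)).sub (((hasDerivAt_id (0:ℝ)).neg).exp)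
      exact this.congr_deriv (by simp)
    have := hasDerivAt_iff_tendsto_slope.mp hD
    have h2 := this.mono_left
      (nhdsWithin_mono 0 (fun x (hx : x ∈ Set.Ioi (0:ℝ)) => ne_of_gt hx))
    refine h2.congr' ?_
    filter_upwards [self_mem_nhdsWithin] with x (hx : 0 < x)
    simp [slope_def_field]
  have hfactor : Tendsto (fun x : ℝ => (x / (1 - Real.exp (-x))) ^ 2)
      (nhdsWithin (0:ℝ) (Set.Ioi 0)) (nhds 1) := by
    have hinv := hslope.inv₀ one_ne_zero
    have : Tendsto (fun x : ℝ => x / (1 - Real.exp (-x)))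
        (nhdsWithin (0:ℝ) (Set.Ioi 0)) (nhds 1) := by
      simpa [one_div] using hinv.congr fun x => by rw [inv_div]
    simpa using this.pow 2
  -- combine
  have hmul := L0.mul hfactor
  rw [mul_one] at hmul
  refine hmul.congr' ?_
  filter_upwards [self_mem_nhdsWithin] with x (hx : 0 < x)
  have hxne : x ≠ 0 := ne_of_gt hx
  have hden_pos : 0 < 1 - Real.exp (-x) := by
    have : Real.exp (-x) < 1 := Real.exp_lt_one_iff.mpr (by linarith)
    linarith
  have hden : (1 : ℝ) - Real.exp (-x) ≠ 0 := ne_of_gt hden_pos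
  have hu : HasDerivAt (fun y : ℝ => Real.exp (-(q * y))) (Real.exp (-(q * x)) * (-(q * 1))) x :=
    (((hasDerivAt_id x).const_mul q).neg).exp
  have hv : HasDerivAt (fun y : ℝ => 1 - Real.exp (-y)) (0 - Real.exp (-x) * (-1)) x :=
    (hasDerivAt_const x (1:ℝ)).sub (((hasDerivAt_id x).neg).exp)
  have hder := (hu.div hv hden).deriv
  rw [show deriv (fun y : ℝ => Real.exp (-(q * y)) / (1 - Real.exp (-y))) x = _ from hder]
  have e2 : Real.exp (-(2 * x)) = Real.exp (-x) * Real.exp (-x) := by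
    rw [← Real.exp_add]; ring_nf
  have eq1 : Real.exp (-((q + 1) * x)) = Real.exp (-(q * x)) * Real.exp (-x) := by
    rw [← Real.exp_add]; ring_nf
  rw [hN0]
  unfold dimF
  rw [e2, eq1]
  field_simp
  ring
end

section
/- Let m be a natural number, let p : Fin m → ℂ be injective, let γ : Fin m → ℂ, and let g ∈ ℂ. Define q(z) = ∑_{i} ( (1/2)/(z − p_i)² + γ_i/(z − p_i) ) for z distinct from all p_i. If z³ q(z) − z/2 tends to g as |z| → ∞ (i.e. along the cobounded filter on ℂ), then the accessory parameters satisfy the three constraints: ∑_i γ_i = 0, ∑_i γ_i p_i = (1 − m)/2, and ∑_i (p_i + γ_i p_i²) = g. -/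
open Filter Bornology

private lemma tendsto_inv_sub_const (p : ℂ) :
    Tendsto (fun z : ℂ => (z - p)⁻¹) (cobounded ℂ) (nhds 0) := by
  apply tendsto_inv₀_cobounded.comp
  rw [← tendsto_norm_atTop_iff_cobounded]
  apply tendsto_atTop_mono (fun z => ?_)
    (tendsto_atTop_add_const_right _ (-‖p‖) tendsto_norm_cobounded_atTop)
  have := norm_sub_norm_le z p
  linarith

private lemma poly_limit (a b c g : ℂ)
    (h : Tendsto (fun z : ℂ => a * z ^ 2 + b * z + c) (cobounded ℂ) (nhds g)) :
    a = 0 ∧ b = 0 ∧ c = g := by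
  have hnat : Tendsto (fun n : ℕ => (n : ℂ)) atTop (cobounded ℂ) := by
    rw [← tendsto_norm_atTop_iff_cobounded]
    simpa using tendsto_natCast_atTop_atTop (R := ℝ)
  have hneg : Tendsto (fun n : ℕ => -(n : ℂ)) atTop (cobounded ℂ) := by
    rw [← tendsto_norm_atTop_iff_cobounded]
    simpa using tendsto_natCast_atTop_atTop (R := ℝ)
  have hI : Tendsto (fun n : ℕ => Complex.I * (n : ℂ)) atTop (cobounded ℂ) := by
    rw [← tendsto_norm_atTop_iff_cobounded]
    simpa using tendsto_natCast_atTop_atTop (R := ℝ)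
  have hinv : Tendsto (fun n : ℕ => ((n : ℂ))⁻¹) atTop (nhds 0) := by
    exact (tendsto_inv₀_cobounded.comp hnat)
  have L1 := h.comp hnat
  have L2 := h.comp hneg
  have L3 := h.comp hI
  -- b = 0
  have hb2 : Tendsto (fun n : ℕ => b * (n : ℂ)) atTop (nhds 0) := by
    have := (L1.sub L2)
    have heq : (fun n : ℕ => ((fun z : ℂ => a * z ^ 2 + b * z + c) ∘ (fun n : ℕ => (n : ℂ))) n
        - ((fun z : ℂ => a * z ^ 2 + b * z + c) ∘ (fun n : ℕ => -(n : ℂ))) n)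
        = fun n : ℕ => 2 * (b * (n : ℂ)) := by funext n; simp [Function.comp]; ring
    rw [heq, sub_self] at this
    have := this.const_mul (2⁻¹ : ℂ)
    simpa [mul_assoc, ← mul_assoc, inv_mul_cancel₀ (two_ne_zero' ℂ)] using this
  have hb : b = 0 := by
    have : Tendsto (fun n : ℕ => b * (n : ℂ) * ((n : ℂ))⁻¹) atTop (nhds (0 * 0)) :=
      hb2.mul hinv
    rw [zero_mul] at this
    have heq : (fun n : ℕ => b) =ᶠ[atTop] fun n : ℕ => b * (n : ℂ) * ((n : ℂ))⁻¹ := by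
      filter_upwards [eventually_ge_atTop 1] with n hn
      have : (n : ℂ) ≠ 0 := Nat.cast_ne_zero.mpr (by omega)
      field_simp
    exact tendsto_nhds_unique tendsto_const_nhds (this.congr' heq.symm)
  -- a = 0
  have ha2 : Tendsto (fun n : ℕ => a * (n : ℂ) ^ 2) atTop (nhds 0) := by
    have := L1.sub L3
    have heq : (fun n : ℕ => ((fun z : ℂ => a * z ^ 2 + b * z + c) ∘ (fun n : ℕ => (n : ℂ))) n
        - ((fun z : ℂ => a * z ^ 2 + b * z + c) ∘ (fun n : ℕ => Complex.I * (n : ℂ))) n)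
        = fun n : ℕ => 2 * (a * (n : ℂ) ^ 2) + (b - b * Complex.I) * (n : ℂ) := by
      funext n; simp [Function.comp]; ring_nf; simp [Complex.I_sq]; ring
    rw [heq, sub_self] at this
    rw [hb] at this
    simp only [zero_mul, zero_sub, neg_zero, zero_mul, add_zero, sub_zero] at this
    have this2 : Tendsto (fun n : ℕ => 2 * (a * (n : ℂ) ^ 2)) atTop (nhds 0) := by
      simpa [hb] using this
    have := this2.const_mul (2⁻¹ : ℂ)
    simpa [← mul_assoc, inv_mul_cancel₀ (two_ne_zero' ℂ)] using this
  have ha : a = 0 := by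
    have hinv2 : Tendsto (fun n : ℕ => ((n : ℂ) ^ 2)⁻¹) atTop (nhds 0) := by
      have := hinv.mul hinv
      simpa [mul_inv, sq] using this
    have : Tendsto (fun n : ℕ => a * (n : ℂ) ^ 2 * ((n : ℂ) ^ 2)⁻¹) atTop (nhds (0 * 0)) :=
      ha2.mul hinv2
    rw [zero_mul] at this
    have heq : (fun n : ℕ => a) =ᶠ[atTop] fun n : ℕ => a * (n : ℂ) ^ 2 * ((n : ℂ) ^ 2)⁻¹ := by
      filter_upwards [eventually_ge_atTop 1] with n hn
      have : (n : ℂ) ≠ 0 := Nat.cast_ne_zero.mpr (by omega)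
      field_simp
    exact tendsto_nhds_unique tendsto_const_nhds (this.congr' heq.symm)
  refine ⟨ha, hb, ?_⟩
  have : Tendsto (fun n : ℕ => c) atTop (nhds g) := by
    have heq : (fun n : ℕ => c) =ᶠ[atTop]
        ((fun z : ℂ => a * z ^ 2 + b * z + c) ∘ (fun n : ℕ => (n : ℂ))) := by
      filter_upwards with n; simp [Function.comp, ha, hb]
    exact L1.congr' heq.symm
  exact tendsto_nhds_unique tendsto_const_nhds this


/-- Constraints on the accessory parameters of the Fuchsian uniformization of the
punctured sphere: if the Schwarzian `q(z) = ∑ᵢ ((1/2)/(z-pᵢ)² + γᵢ/(z-pᵢ))`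
satisfies `z³ q(z) - z/2 → g` as `|z| → ∞`, then `∑γᵢ = 0`,
`∑γᵢpᵢ = (1-m)/2` and `∑(pᵢ + γᵢpᵢ²) = g`. -/
theorem accessory_parameter_constraints (m : ℕ) (p γ : Fin m → ℂ)
    (hp : Function.Injective p) (g : ℂ)
    (h : Tendsto
      (fun z : ℂ =>
        z ^ 3 * (∑ i, ((1 / 2) / (z - p i) ^ 2 + γ i / (z - p i))) - z / 2)
      (Bornology.cobounded ℂ) (nhds g)) :
    (∑ i, γ i = 0) ∧ (∑ i, γ i * p i = (1 - (m : ℂ)) / 2) ∧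
      (∑ i, (p i + γ i * p i ^ 2) = g) := by
  set S0 := ∑ i, γ i with hS0
  set S1 := ((m : ℂ) - 1) / 2 + ∑ i, γ i * p i with hS1
  set S2 := ∑ i, (p i + γ i * p i ^ 2) with hS2
  -- tail
  set ε : ℂ → ℂ := fun z => ∑ i,
    ((3 * (p i) ^ 2 / 2 + γ i * (p i) ^ 3) / (z - p i) + ((p i) ^ 3 / 2) / (z - p i) ^ 2) with hε
  have hεlim : Tendsto ε (cobounded ℂ) (nhds 0) := by
    rw [hε]
    have : (0 : ℂ) = ∑ i : Fin m, (0 : ℂ) := by simp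
    rw [this]
    apply tendsto_finset_sum
    intro i _
    have h1 := (tendsto_inv_sub_const (p i)).const_mul (3 * (p i) ^ 2 / 2 + γ i * (p i) ^ 3)
    have h2 := ((tendsto_inv_sub_const (p i)).mul (tendsto_inv_sub_const (p i))).const_mul
      ((p i) ^ 3 / 2)
    simp only [mul_zero] at h1 h2
    have := h1.add h2
    rw [add_zero] at this
    refine this.congr fun z => ?_
    simp only [div_eq_mul_inv, pow_two, mul_inv]
  have hev : (fun z : ℂ => S0 * z ^ 2 + S1 * z + S2) =ᶠ[Bornology.cobounded ℂ]
      fun z => (z ^ 3 * (∑ i, ((1 / 2) / (z - p i) ^ 2 + γ i / (z - p i))) - z / 2) - ε z := by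
    have hne : ∀ᶠ z : ℂ in Bornology.cobounded ℂ, ∀ i, z ≠ p i := by
      rw [eventually_all]
      intro i
      filter_upwards [eventually_cobounded_le_norm (‖p i‖ + 1)] with z hz
      intro hzp
      rw [hzp] at hz
      linarith
    filter_upwards [hne] with z hz
    have key : ∀ i : Fin m, z ^ 3 * ((1 / 2) / (z - p i) ^ 2 + γ i / (z - p i))
        = (γ i * z ^ 2 + (1 / 2 + γ i * p i) * z + (p i + γ i * p i ^ 2))
          + ((3 * (p i) ^ 2 / 2 + γ i * (p i) ^ 3) / (z - p i)
            + ((p i) ^ 3 / 2) / (z - p i) ^ 2) := by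
      intro i
      have hzi : z - p i ≠ 0 := sub_ne_zero.mpr (hz i)
      field_simp [hzi]
      ring
    have hsum : z ^ 3 * (∑ i, ((1 / 2) / (z - p i) ^ 2 + γ i / (z - p i)))
        = (∑ i, (γ i * z ^ 2 + (1 / 2 + γ i * p i) * z + (p i + γ i * p i ^ 2))) + ε z := by
      rw [Finset.mul_sum, hε, ← Finset.sum_add_distrib]
      exact Finset.sum_congr rfl fun i _ => key i
    have hmain : (∑ i, (γ i * z ^ 2 + (1 / 2 + γ i * p i) * z + (p i + γ i * p i ^ 2)))
        = S0 * z ^ 2 + ((m : ℂ) / 2 + ∑ i, γ i * p i) * z + S2 := by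
      rw [Finset.sum_add_distrib, Finset.sum_add_distrib, ← Finset.sum_mul, ← Finset.sum_mul,
        hS0, hS2, Finset.sum_add_distrib, Finset.sum_const, Finset.card_univ,
        Fintype.card_fin, nsmul_eq_mul]
      ring
    rw [hsum, hmain, hS1]
    ring
  have hpoly : Tendsto (fun z : ℂ => S0 * z ^ 2 + S1 * z + S2)
      (Bornology.cobounded ℂ) (nhds g) := by
    have := h.sub hεlim
    rw [sub_zero] at this
    exact this.congr' hev.symm
  obtain ⟨h0, h1, h2⟩ := poly_limit S0 S1 S2 g hpoly
  refine ⟨h0, ?_, h2⟩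
  have : ((m : ℂ) - 1) / 2 + ∑ i, γ i * p i = 0 := h1
  have : ∑ i, γ i * p i = -(((m : ℂ) - 1) / 2) := by linear_combination this
  rw [this]; ring
end

section
/- Let a, b ∈ ℂ with |a|² + |b|² = 1, and let f(w) = (aw + b)/(−conj(b)·w + conj(a)). Let N be a natural number, β > 0 and t real, and let z : Fin N → ℂ satisfy −conj(b)·z_i + conj(a) ≠ 0 for all i. Define P(z) = ∏_{i<j} |z_i − z_j|^{2β} · ∏_i (1 + |z_i|²)^{−t}. Then P(f ∘ z) = ( ∏_i |−conj(b)·z_i + conj(a)|^{−2} )^{β(N−1) − t} · P(z); that is, the Laughlin probability density on the round sphere transforms under SU(2) Möbius maps with the weight ∏_i |f'(z_i)|^{β(N−1) − t}, where |f'(z_i)| = |−conj(b)·z_i + conj(a)|^{−2}. -/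
open Finset

private theorem laughlin_prod_Ioi_mul {M : Type*} [CommMonoid M] (N : ℕ) (g : Fin N → M) :
    (∏ i : Fin N, ∏ j ∈ Ioi i, (g i * g j)) = (∏ i : Fin N, g i) ^ (N - 1) := by
  have h1 : (∏ i : Fin N, ∏ j ∈ Ioi i, (g i * g j))
      = (∏ i : Fin N, ∏ j ∈ Ioi i, g i) * (∏ i : Fin N, ∏ j ∈ Ioi i, g j) := by
    rw [← Finset.prod_mul_distrib]
    exact Finset.prod_congr rfl fun i _ => by rw [← Finset.prod_mul_distrib]
  have h2 : (∏ i : Fin N, ∏ j ∈ Ioi i, g j) = ∏ j : Fin N, ∏ i ∈ Iio j, g j :=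
    Finset.prod_comm' (by simp [Finset.mem_Ioi, Finset.mem_Iio])
  rw [h1, h2]
  simp only [Finset.prod_const]
  rw [← Finset.prod_mul_distrib, ← Finset.prod_pow]
  refine Finset.prod_congr rfl fun i _ => ?_
  rw [← pow_add]
  congr 1
  rw [Fin.card_Ioi, Fin.card_Iio]
  omega

/-- Transformation law of the Laughlin probability density on the round sphere
under `SU(2)` Möbius maps `f(w) = (aw+b)/(-conj(b)w + conj(a))`, `|a|²+|b|² = 1`:
with `P(z) = ∏_{i<j}|zᵢ-zⱼ|^{2β} ∏ᵢ(1+|zᵢ|²)^{-t}` one has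
`P(f∘z) = (∏ᵢ |-conj(b)zᵢ + conj(a)|^{-2})^{β(N-1)-t} P(z)`. -/
theorem laughlin_su2_covariance (a b : ℂ)
    (h : ‖a‖ ^ 2 + ‖b‖ ^ 2 = 1)
    (N : ℕ) (β t : ℝ) (hβ : 0 < β) (z : Fin N → ℂ)
    (hz : ∀ i, -(starRingEnd ℂ) b * z i + (starRingEnd ℂ) a ≠ 0) :
    (∏ i : Fin N, ∏ j ∈ Finset.Ioi i,
        ‖((a * z i + b) / (-(starRingEnd ℂ) b * z i + (starRingEnd ℂ) a) -
              (a * z j + b) / (-(starRingEnd ℂ) b * z j + (starRingEnd ℂ) a))‖ ^ (2 * β)) *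
      ∏ i : Fin N,
        (1 + ‖((a * z i + b) / (-(starRingEnd ℂ) b * z i + (starRingEnd ℂ) a))‖ ^ 2) ^ (-t)
    = (∏ i : Fin N,
          ‖(-(starRingEnd ℂ) b * z i + (starRingEnd ℂ) a)‖ ^ (-(2 : ℝ))) ^
          (β * ((N : ℝ) - 1) - t) *
      ((∏ i : Fin N, ∏ j ∈ Finset.Ioi i, ‖(z i - z j)‖ ^ (2 * β)) *
        ∏ i : Fin N, (1 + ‖(z i)‖ ^ 2) ^ (-t)) := by
  have hC : a * (starRingEnd ℂ) a + b * (starRingEnd ℂ) b = 1 := by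
    rw [Complex.mul_conj, Complex.mul_conj]
    norm_cast
    rw [Complex.sq_norm, Complex.sq_norm] at h
    exact_mod_cast h
  set d : Fin N → ℂ := fun i => -(starRingEnd ℂ) b * z i + (starRingEnd ℂ) a with hd_def
  set D : Fin N → ℝ := fun i => ‖d i‖ with hD_def
  have hD : ∀ i, 0 < D i := fun i => norm_pos_iff.mpr (hz i)
  have lemA : ∀ i j, ‖(a * z i + b) / d i - (a * z j + b) / d j‖
      = ‖z i - z j‖ / (D i * D j) := by
    intro i j
    have : (a * z i + b) / d i - (a * z j + b) / d j = (z i - z j) / (d i * d j) := by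
      rw [div_sub_div _ _ (hz i) (hz j)]
      congr 1
      show (a * z i + b) * (-(starRingEnd ℂ) b * z j + (starRingEnd ℂ) a) -
        (-(starRingEnd ℂ) b * z i + (starRingEnd ℂ) a) * (a * z j + b) = z i - z j
      linear_combination (z i - z j) * hC
    rw [this, norm_div, norm_mul]
  have lemB : ∀ i, 1 + ‖(a * z i + b) / d i‖ ^ 2
      = (1 + ‖z i‖ ^ 2) / D i ^ 2 := by
    intro i
    rw [norm_div, div_pow]
    rw [eq_div_iff (by have := hD i; positivity), add_mul, one_mul,
      div_mul_cancel₀ _ (by have := hD i; positivity)]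
    have keyC : ((Complex.normSq (d i) + Complex.normSq (a * z i + b) : ℝ) : ℂ)
        = ((1 + Complex.normSq (z i) : ℝ) : ℂ) := by
      push_cast
      rw [← Complex.mul_conj, ← Complex.mul_conj, ← Complex.mul_conj]
      show (-(starRingEnd ℂ) b * z i + (starRingEnd ℂ) a) *
          (starRingEnd ℂ) (-(starRingEnd ℂ) b * z i + (starRingEnd ℂ) a) +
          (a * z i + b) * (starRingEnd ℂ) (a * z i + b)
          = 1 + z i * (starRingEnd ℂ) (z i)
      simp only [map_add, map_mul, map_neg, Complex.conj_conj]
      linear_combination (1 + z i * (starRingEnd ℂ) (z i)) * hC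
    have key := Complex.ofReal_inj.mp keyC
    rw [Complex.sq_norm, Complex.sq_norm, Complex.sq_norm]
    linarith [key]
  obtain _ | n := N
  · simp
  have hL1 : (∏ i : Fin (n+1), ∏ j ∈ Finset.Ioi i,
      ‖(a * z i + b) / d i - (a * z j + b) / d j‖ ^ (2 * β))
      = (∏ i : Fin (n+1), ∏ j ∈ Finset.Ioi i, ‖z i - z j‖ ^ (2 * β)) *
        ∏ i : Fin (n+1), D i ^ (-(2 * β) * n) := by
    have step : ∀ i : Fin (n+1), ∀ j ∈ Finset.Ioi i,
        ‖(a * z i + b) / d i - (a * z j + b) / d j‖ ^ (2 * β)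
        = ‖z i - z j‖ ^ (2 * β) *
          (D i ^ (-(2*β)) * D j ^ (-(2*β))) := by
      intro i j _
      rw [lemA i j, Real.div_rpow (by positivity) (by have := hD i; have := hD j; positivity),
        Real.mul_rpow (hD i).le (hD j).le, div_eq_mul_inv, mul_inv,
        ← Real.rpow_neg (hD i).le, ← Real.rpow_neg (hD j).le]
    rw [Finset.prod_congr rfl fun i _ => Finset.prod_congr rfl (step i)]
    rw [Finset.prod_congr rfl fun i (_ : i ∈ Finset.univ) => Finset.prod_mul_distrib,
      Finset.prod_mul_distrib]
    congr 1
    rw [laughlin_prod_Ioi_mul]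
    simp only [Nat.add_sub_cancel]
    rw [← Finset.prod_pow]
    refine Finset.prod_congr rfl fun i _ => ?_
    rw [← Real.rpow_natCast (D i ^ (-(2*β))) n, ← Real.rpow_mul (hD i).le]
  have hL2 : (∏ i : Fin (n+1), (1 + ‖(a * z i + b) / d i‖ ^ 2) ^ (-t))
      = (∏ i : Fin (n+1), (1 + ‖z i‖ ^ 2) ^ (-t)) *
        ∏ i : Fin (n+1), D i ^ (2 * t) := by
    rw [← Finset.prod_mul_distrib]
    refine Finset.prod_congr rfl fun i _ => ?_
    rw [lemB i, Real.div_rpow (by positivity) (by have := hD i; positivity)]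
    rw [div_eq_mul_inv, ← Real.rpow_neg (by have := hD i; positivity)]
    congr 1
    rw [← Real.rpow_natCast (D i) 2, ← Real.rpow_mul (hD i).le]
    norm_num
  rw [hL1, hL2]
  have hR : (∏ i : Fin (n+1), D i ^ (-(2:ℝ))) ^ (β * (((n+1 : ℕ) : ℝ) - 1) - t)
      = (∏ i : Fin (n+1), D i ^ (-(2 * β) * n)) * ∏ i : Fin (n+1), D i ^ (2 * t) := by
    rw [← Real.finset_prod_rpow _ _ (fun i _ => Real.rpow_nonneg (hD i).le _) _,
      ← Finset.prod_mul_distrib]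
    refine Finset.prod_congr rfl fun i _ => ?_
    rw [← Real.rpow_mul (hD i).le, ← Real.rpow_add (hD i)]
    congr 1
    push_cast
    ring
  rw [hR]
  ring
end

section
/- Let H be a complex Hilbert space, U ⊆ ℂ open, and F : ℂ → H complex-differentiable on U with F(p) ≠ 0 for all p ∈ U. Set Z(p) = ‖F(p)‖² and Ψ(p) = Z(p)^{−1/2} · F(p). Fix p ∈ U, and let ∂₁Ψ and ∂₂Ψ denote the derivatives at t = 0 of the maps t ↦ Ψ(p + t) and t ↦ Ψ(p + it) for real t, and similarly ∂₁(log Z) and ∂₂(log Z) for the real-valued function log Z. Then ⟨Ψ(p), (1/2)(∂₁Ψ − i·∂₂Ψ)⟩ = (1/2) · (1/2)(∂₁(log Z) − i·∂₂(log Z)); that is, the Berry connection of a normalized holomorphic family equals one half the Wirtinger p-derivative of the logarithm of the normalization integral, so that log Z is a Kähler potential for the Berry curvature. -/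
open scoped InnerProductSpace ComplexConjugate

section aux
variable {H : Type*} [NormedAddCommGroup H] [InnerProductSpace ℂ H]

lemma aux_line_deriv (F : ℂ → H) (p : ℂ) (hFd : DifferentiableAt ℂ F p) (v : ℂ) :
    HasDerivAt (fun t : ℝ => F (p + (t : ℂ) * v)) (v • deriv F p) 0 := by
  have h1 : HasDerivAt (fun t : ℝ => p + (t : ℂ) * v) v 0 := by
    simpa using ((Complex.ofRealCLM.hasDerivAt.mul_const v).const_add p)
  have hpt : p = p + ((0:ℝ) : ℂ) * v := by simp
  have h2 := (hpt ▸ (hFd.hasFDerivAt.restrictScalars ℝ)).comp_hasDerivAt (x := (0 : ℝ)) h1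
  have h3 : ((fderiv ℂ F p).restrictScalars ℝ) v = v • deriv F p := by
    rw [ContinuousLinearMap.coe_restrictScalars']
    conv_lhs => rw [show v = v • (1 : ℂ) by simp, map_smul]
    rfl
  simpa [h3, Function.comp_def] using h2

end aux

/-- The Berry connection of a normalized holomorphic family of states equals one
half the Wirtinger `p`-derivative of `log Z`, i.e. `log Z` is a Kähler potential
for the Berry curvature: for `Ψ(p) = Z(p)^{-1/2} F(p)` with `F` holomorphic and
nonvanishing on an open set `U`, `Z(p) = ‖F(p)‖²`,
`⟨Ψ, ∂_p Ψ⟩ = (1/2) ∂_p log Z` at every `p ∈ U`,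
where `∂_p = (1/2)(∂₁ - i ∂₂)`. -/
theorem berry_connection_kahler_potential
    {H : Type*} [NormedAddCommGroup H] [InnerProductSpace ℂ H]
    (U : Set ℂ) (hU : IsOpen U) (F : ℂ → H)
    (hF : ∀ p ∈ U, DifferentiableAt ℂ F p) (hF0 : ∀ p ∈ U, F p ≠ 0)
    (Z : ℂ → ℝ) (hZ : ∀ p, Z p = ‖F p‖ ^ 2)
    (Ψ : ℂ → H) (hΨ : ∀ p, Ψ p = (Z p ^ (-(1 : ℝ) / 2)) • F p)
    (p : ℂ) (hp : p ∈ U) :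
    (inner ℂ (Ψ p)
        ((1 / 2 : ℂ) •
          (deriv (fun t : ℝ => Ψ (p + (t : ℂ))) 0 -
            Complex.I • deriv (fun t : ℝ => Ψ (p + (t : ℂ) * Complex.I)) 0)) : ℂ)
    = (1 / 2 : ℂ) *
        ((1 / 2 : ℂ) *
          (((deriv (fun t : ℝ => Real.log (Z (p + (t : ℂ)))) 0 : ℝ) : ℂ) -
            Complex.I * ((deriv (fun t : ℝ => Real.log (Z (p + (t : ℂ) * Complex.I))) 0 : ℝ) : ℂ))) := by
  have hd := hF p hp
  have hFp : F p ≠ 0 := hF0 p hp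
  set G := deriv F p with hG
  set r : ℝ := Z p with hrdef
  have hr : (0:ℝ) < r := by
    rw [hrdef, hZ]; exact pow_pos (norm_pos_iff.mpr hFp) 2
  set s : ℝ := r ^ (-(1:ℝ)/2) with hs
  set s3 : ℝ := r ^ (-(1:ℝ)/2 - 1) with hs3def
  set c : ℂ := inner ℂ (F p) G with hc
  have key : ∀ v : ℂ, ∃ A : ℝ, ((A:ℂ) = v * c + conj v * conj c) ∧
      deriv (fun t : ℝ => Real.log (Z (p + (t:ℂ) * v))) 0 = A / r ∧
      deriv (fun t : ℝ => Ψ (p + (t:ℂ) * v)) 0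
        = s • (v • G) + (-(1:ℝ)/2 * s3 * A) • F p := by
    intro v
    have hf := aux_line_deriv F p hd v
    have hip : HasDerivAt (fun t : ℝ => (inner ℂ (F (p + (t:ℂ)*v)) (F (p + (t:ℂ)*v)) : ℂ))
        ((inner ℂ (F p) (v • G) : ℂ) + (inner ℂ (v • G) (F p) : ℂ)) 0 := by
      have := hf.inner ℂ hf
      simp only [Complex.ofReal_zero, zero_mul, add_zero] at this
      exact this
    set w : ℂ := (inner ℂ (F p) (v • G) : ℂ) + (inner ℂ (v • G) (F p) : ℂ) with hw
    have hwval : w = v * c + conj v * conj c := by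
      rw [hw, inner_smul_right, inner_smul_left, hc]
      rw [← inner_conj_symm (F p) G]
      simp
    have hconj : conj w = w := by
      rw [hwval]; simp only [map_add, map_mul, Complex.conj_conj]; ring
    have hAval : ((w.re : ℝ) : ℂ) = v * c + conj v * conj c := by
      rw [Complex.conj_eq_iff_re.mp hconj, hwval]
    have hz : HasDerivAt (fun t : ℝ => Z (p + (t:ℂ)*v)) w.re 0 := by
      have h2 := Complex.reCLM.hasFDerivAt.comp_hasDerivAt 0 hip
      have hfun : (fun t : ℝ => Complex.reCLM ((inner ℂ (F (p + (t:ℂ)*v)) (F (p + (t:ℂ)*v)) : ℂ)))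
          = fun t : ℝ => Z (p + (t:ℂ)*v) := by
        funext t
        rw [hZ, @inner_self_eq_norm_sq_to_K ℂ]
        norm_cast
      rw [← hfun]
      exact h2
    have hZ0 : Z (p + ((0:ℝ):ℂ)*v) = r := by simp [hrdef]
    refine ⟨w.re, hAval, ?_, ?_⟩
    · have hlog := hz.log (by rw [hZ0]; exact hr.ne')
      rw [hZ0] at hlog
      exact hlog.deriv
    · have hzr := hz.rpow_const (p := -(1:ℝ)/2) (Or.inl (by rw [hZ0]; exact hr.ne'))
      have hpsi := hzr.smul hf
      have hfun : (fun t : ℝ => Z (p + (t:ℂ)*v) ^ (-(1:ℝ)/2) • F (p + (t:ℂ)*v))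
          = fun t : ℝ => Ψ (p + (t:ℂ)*v) := by
        funext t; rw [hΨ]
      rw [show ((fun y : ℝ => Z (p + (y:ℂ)*v) ^ (-(1:ℝ)/2)) • fun t : ℝ => F (p + (t:ℂ)*v)) = fun t : ℝ => Z (p + (t:ℂ)*v) ^ (-(1:ℝ)/2) • F (p + (t:ℂ)*v) from rfl, hfun, hZ0] at hpsi
      rw [hpsi.deriv]
      rw [show ((0:ℝ):ℂ) * v = 0 by simp, add_zero]
      rw [← hs, ← hs3def, ← hG]
      ring_nf
  obtain ⟨A₁, hA₁, hL₁, hD₁⟩ := key 1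
  obtain ⟨A₂, hA₂, hL₂, hD₂⟩ := key Complex.I
  have e1 : (fun t : ℝ => Ψ (p + (t:ℂ))) = fun t : ℝ => Ψ (p + (t:ℂ) * 1) := by
    funext t; rw [mul_one]
  have e2 : (fun t : ℝ => Real.log (Z (p + (t:ℂ)))) = fun t : ℝ => Real.log (Z (p + (t:ℂ) * 1)) := by
    funext t; rw [mul_one]
  rw [e1, e2, hL₁, hL₂, hD₁, hD₂]
  have hPsip : Ψ p = s • F p := by rw [hΨ, ← hrdef, ← hs]
  have hinner_self : (inner ℂ (F p) (F p) : ℂ) = ((r:ℝ):ℂ) := by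
    rw [@inner_self_eq_norm_sq_to_K ℂ, hrdef, hZ]; norm_cast
  have hss : (s:ℂ) * (s:ℂ) * (r:ℂ) = 1 := by
    have h1 : s * s * r = 1 := by
      rw [hs, ← Real.rpow_add hr, show (-(1:ℝ)/2 + -(1:ℝ)/2) = -1 by norm_num,
        Real.rpow_neg_one]
      field_simp
    exact_mod_cast congrArg (Complex.ofReal) h1
  have hs3 : (s3:ℂ) * (r:ℂ) = (s:ℂ) := by
    have h1 : s3 * r = s := by
      rw [hs3def, hs, show (-(1:ℝ)/2 - 1) = (-(1:ℝ)/2) + (-1) by ring,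
        Real.rpow_add hr, Real.rpow_neg_one]
      field_simp
    exact_mod_cast congrArg (Complex.ofReal) h1
  have hr0 : (r:ℂ) ≠ 0 := by exact_mod_cast hr.ne'
  rw [hPsip]
  have hsm : ∀ (a : ℝ) (x : H), a • x = (Complex.ofReal a) • x := fun a x => by
    rw [RCLike.real_smul_eq_coe_smul (K := ℂ)]; norm_cast
  simp only [hsm, one_smul]
  simp only [smul_smul, inner_sub_right, inner_add_right, inner_smul_right, inner_smul_left,
    hinner_self, ← hc, Complex.conj_ofReal]
  push_cast
  simp only [map_one, one_mul, Complex.conj_I] at hA₁ hA₂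
  rw [hA₁, hA₂]
  have hτ : (s3:ℂ) = (s:ℂ) * ((r:ℂ))⁻¹ := eq_mul_inv_iff_mul_eq₀ hr0 |>.mpr hs3
  rw [hτ]
  field_simp
  linear_combination (c - c * Complex.I ^ 2) * hss +
    (-(((s:ℝ):ℂ) * ((s:ℝ):ℂ) * ((r:ℝ):ℂ) + 1) * (starRingEnd ℂ) c) * Complex.I_sq
end
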